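/- Let C be a small category and D a cocomplete category. Then precomposition with the Yoneda embedding y : C → Psh(C) induces an equivalence of categories between the full subcategory of the functor category Psh(C) ⥤ D spanned by the colimit-preserving functors and the functor category C ⥤ D. (In particular, every functor C → D extends, uniquely up to isomorphism, to a colimit-preserving functor Psh(C) → D.) -/

import Mathlib

open CategoryTheory CategoryTheory.Limits

universe u u₂

/-- For a small category `C` and a cocomplete category `D`, precomposition with the Yoneda
embedding `y : C ⥤ Psh(C)` induces an equivalence between the full subcategory of
`Psh(C) ⥤ D` spanned by the colimit-preserving functors and the functor category `C ⥤ D`. -/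
theorem stmt_0 (C : Type u) [SmallCategory C] (D : Type u₂) [Category.{u} D]
    [HasColimits D] :
    (ObjectProperty.ι
        (fun F : (Cᵒᵖ ⥤ Type u) ⥤ D => Nonempty (PreservesColimitsOfSize.{u, u} F)) ⋙
      (Functor.whiskeringLeft C (Cᵒᵖ ⥤ Type u) D).obj yoneda).IsEquivalence := by
  set G := ObjectProperty.ι
        (fun F : (Cᵒᵖ ⥤ Type u) ⥤ D => Nonempty (PreservesColimitsOfSize.{u, u} F)) ⋙
      (Functor.whiskeringLeft C (Cᵒᵖ ⥤ Type u) D).obj yoneda with hG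
  have hmap : ∀ (X Y : ObjectProperty.FullSubcategory
      (fun F : (Cᵒᵖ ⥤ Type u) ⥤ D => Nonempty (PreservesColimitsOfSize.{u, u} F)))
      (f : X ⟶ Y), G.map f = Functor.whiskerLeft yoneda f.hom := fun _ _ _ => rfl
  have key : ∀ (X Y : ObjectProperty.FullSubcategory
      (fun F : (Cᵒᵖ ⥤ Type u) ⥤ D => Nonempty (PreservesColimitsOfSize.{u, u} F))),
      ∃ e : (X ⟶ Y) ≃ (G.obj X ⟶ G.obj Y), ∀ f, e f = G.map f := by
    intro X Y
    have : PreservesColimitsOfSize.{u, u} X.obj := X.property.some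
    have : X.obj.IsLeftKanExtension (𝟙 (yoneda ⋙ X.obj)) := by
      have h1 : X.obj.IsLeftKanExtension (𝟙 (uliftYoneda.{u, u, u} ⋙ X.obj)) :=
        Presheaf.isLeftKanExtension_of_preservesColimits _ (Iso.refl _)
      have h2 : X.obj.IsLeftKanExtension (L := yoneda)
          (Functor.whiskerRight uliftYonedaIsoYoneda.{u, u, u}.hom X.obj) :=
        ⟨⟨(IsInitial.isInitialIffObj (Functor.leftExtensionEquivalenceOfIso₁
          uliftYonedaIsoYoneda.{u, u, u} (uliftYoneda.{u, u, u} ⋙ X.obj)).functor _).1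
          h1.nonempty_isUniversal.some |>.ofIso
          (StructuredArrow.isoMk (Iso.refl _) (by
            ext x; exact (Category.id_comp _ =≫ _).trans (Category.comp_id _)))⟩⟩
      exact (Functor.isLeftKanExtension_iff_of_iso₂ _ _
        (Functor.isoWhiskerRight uliftYonedaIsoYoneda.{u, u, u} X.obj) (Iso.refl _)
        (by simp)).1 h2
    refine ⟨InducedCategory.homEquiv.trans <| X.obj.homEquivOfIsLeftKanExtension (𝟙 (yoneda ⋙ X.obj)) Y.obj, fun f => ?_⟩
    simp only [Equiv.trans_apply, Functor.homEquivOfIsLeftKanExtension, Equiv.coe_fn_mk, hmap, Category.id_comp]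
    rfl
  have : G.Faithful := ⟨fun {X Y f g} h => by
    obtain ⟨e, he⟩ := key X Y
    apply e.injective
    rw [he, he, h]⟩
  have : G.Full := ⟨fun {X Y} f => by
    obtain ⟨e, he⟩ := key X Y
    exact ⟨e.symm f, by rw [← he, e.apply_symm_apply]⟩⟩
  have : G.EssSurj := ⟨fun A => by
    refine ⟨⟨uliftYoneda.{u, u, u}.leftKanExtension A, ⟨inferInstance⟩⟩, ⟨?_⟩⟩
    exact Functor.isoWhiskerRight uliftYonedaIsoYoneda.{u, u, u}.symm _ ≪≫
      Presheaf.isExtensionAlongULiftYoneda A⟩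
  exact { }
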